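/- For all natural numbers n, the sum over k from 0 to n of C(n,k)^2 * C(2n+k, k) * (H_k - H_{n-k}) equals C(2n,n)^2 * (H_{2n} - H_n). -/

import Mathlib

open Finset Polynomial DualNumber TrivSqZeroExt

def harmonicQ (m : Nat) : ℚ := ∑ j ∈ Finset.range m, (1 : ℚ) / (j + 1)


lemma vand (a b c : ℕ) :
    (a + b).choose c = ∑ i ∈ range (c + 1), a.choose i * b.choose (c - i) := by
  rw [Nat.add_choose_eq, Finset.Nat.sum_antidiagonal_eq_sum_range_succ_mk]

lemma T2 (n k j : ℕ) :
    n.choose k * (n - k).choose j = n.choose (k + j) * (k + j).choose k := by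
  by_cases h : k + j ≤ n
  · rw [Nat.choose_mul (Nat.le_add_right k j), Nat.add_sub_cancel_left]
  · push_neg at h
    rw [Nat.choose_eq_zero_of_lt h, Nat.zero_mul]
    by_cases hk : k ≤ n
    · rw [Nat.choose_eq_zero_of_lt (by omega : n - k < j), Nat.mul_zero]
    · rw [Nat.choose_eq_zero_of_lt (by omega : n < k), Nat.zero_mul]

lemma vand2 (n y : ℕ) (hy : n ≤ y) :
    ∑ j ∈ range (n + 1), n.choose j * (y - n).choose j = y.choose n := by
  have h := vand (y - n) n n
  rw [Nat.sub_add_cancel hy] at h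
  rw [h]
  refine Finset.sum_congr rfl fun i hi => ?_
  rw [mem_range] at hi
  rw [Nat.choose_symm (by omega : i ≤ n), mul_comm]

lemma idP (n y : ℕ) :
    ∑ j ∈ range (n + 1), n.choose j * ((n + j).choose j * y.choose (n + j))
      = y.choose n ^ 2 := by
  have step : ∀ j, (n + j).choose j * y.choose (n + j)
      = y.choose n * (y - n).choose j := by
    intro j
    rw [← Nat.choose_symm_add, mul_comm, T2 y n j]
  simp_rw [step]
  rw [show ∀ s : Finset ℕ, ∑ j ∈ s, n.choose j * (y.choose n * (y - n).choose j)
      = y.choose n * ∑ j ∈ s, n.choose j * (y - n).choose j from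
    fun s => by rw [Finset.mul_sum]; exact Finset.sum_congr rfl fun j _ => by ring]
  by_cases hy : n ≤ y
  · rw [vand2 n y hy, sq]
  · rw [Nat.choose_eq_zero_of_lt (by omega), Nat.zero_mul, sq, Nat.zero_mul]

lemma inner1 (n i : ℕ) :
    ∑ k ∈ range (n + 1), n.choose k ^ 2 * k.choose i
      = n.choose i * (2 * n - i).choose n := by
  by_cases hi : i ≤ n
  · have h1 : ∑ k ∈ range (n + 1), n.choose k ^ 2 * k.choose i
        = ∑ k ∈ Ico i (n + 1), n.choose k ^ 2 * k.choose i := by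
      refine (Finset.sum_subset ?_ ?_).symm
      · intro k hk; rw [mem_Ico] at hk; rw [mem_range]; omega
      · intro k hk hk'
        rw [mem_range] at hk; rw [mem_Ico] at hk'
        rw [Nat.choose_eq_zero_of_lt (by omega : k < i), Nat.mul_zero]
    rw [h1, Finset.sum_Ico_eq_sum_range]
    have h2 : n + 1 - i = (n - i) + 1 := by omega
    rw [h2]
    have h3 : ∀ t ∈ range ((n - i) + 1), n.choose (i + t) ^ 2 * (i + t).choose i
        = n.choose i * ((n - i).choose t * n.choose ((n - i) - t)) := by
      intro t ht
      rw [mem_range] at ht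
      have hit : i + t ≤ n := by omega
      have e1 : n.choose (i + t) * (i + t).choose i = n.choose i * (n - i).choose t := by
        rw [T2 n i t]
      have e2 : n.choose (i + t) = n.choose ((n - i) - t) := by
        rw [← Nat.choose_symm hit, Nat.sub_sub]
      calc n.choose (i + t) ^ 2 * (i + t).choose i
          = (n.choose (i + t) * (i + t).choose i) * n.choose (i + t) := by ring
        _ = (n.choose i * (n - i).choose t) * n.choose ((n - i) - t) := by rw [e1, e2]
        _ = n.choose i * ((n - i).choose t * n.choose ((n - i) - t)) := by ring
    rw [Finset.sum_congr rfl h3, ← Finset.mul_sum, ← vand (n - i) n (n - i),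
      Nat.choose_symm_add, show n - i + n = 2 * n - i from by omega]
  · rw [Nat.choose_eq_zero_of_lt (by omega : n < i), Nat.zero_mul]
    refine Finset.sum_eq_zero fun k hk => ?_
    rw [mem_range] at hk
    rw [Nat.choose_eq_zero_of_lt (by omega : k < i), Nat.mul_zero]

lemma idA (n x : ℕ) :
    ∑ k ∈ range (n + 1), n.choose k ^ 2 * (x + k).choose (2 * n)
      = x.choose n ^ 2 := by
  have step1 : ∀ k, (x + k).choose (2 * n)
      = ∑ i ∈ range (2 * n + 1), k.choose i * x.choose (2 * n - i) := by
    intro k; rw [Nat.add_comm x k, vand]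
  simp_rw [step1, Finset.mul_sum]
  rw [Finset.sum_comm]
  have step2 : ∀ i ∈ range (2 * n + 1),
      (∑ k ∈ range (n + 1), n.choose k ^ 2 * (k.choose i * x.choose (2 * n - i)))
        = (n.choose i * (2 * n - i).choose n) * x.choose (2 * n - i) := by
    intro i _
    calc ∑ k ∈ range (n + 1), n.choose k ^ 2 * (k.choose i * x.choose (2 * n - i))
        = (∑ k ∈ range (n + 1), n.choose k ^ 2 * k.choose i) * x.choose (2 * n - i) := by
          rw [Finset.sum_mul]; exact Finset.sum_congr rfl fun k _ => by ring
      _ = n.choose i * (2 * n - i).choose n * x.choose (2 * n - i) := by rw [inner1]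
  rw [Finset.sum_congr rfl step2]
  have trim : ∑ i ∈ range (2 * n + 1), (n.choose i * (2 * n - i).choose n) * x.choose (2 * n - i)
      = ∑ i ∈ range (n + 1), (n.choose i * (2 * n - i).choose n) * x.choose (2 * n - i) := by
    refine (Finset.sum_subset (Finset.range_subset_range.mpr (by omega)) ?_).symm
    intro i hi hi'
    rw [mem_range] at hi; rw [mem_range] at hi'
    rw [Nat.choose_eq_zero_of_lt (by omega : n < i), Nat.zero_mul, Nat.zero_mul]
  rw [trim, ← Finset.sum_range_reflect]
  rw [← idP n x]
  refine Finset.sum_congr rfl fun j hj => ?_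
  rw [mem_range] at hj
  have hjn : j ≤ n := by omega
  rw [Nat.sub_sub, show n + 1 - (1 + j) = n - j from by omega,
    Nat.choose_symm hjn, show 2 * n - (n - j) = n + j from by omega,
    show (n + j).choose n = (n + j).choose j from Nat.choose_symm_add]
  ring

lemma T3 (n k j : ℕ) :
    n.choose k * (n - k).choose j = n.choose j * (n - j).choose k := by
  rw [T2 n k j, T2 n j k, Nat.add_comm j k, Nat.choose_symm_add]

lemma S0 (m a b : ℕ) (h : m ≤ b) :
    ∑ i ∈ range (a + 1), m.choose i * a.choose i
      = ∑ i ∈ range (b + 1), m.choose i * a.choose i := by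
  have h1 : ∑ i ∈ range (a + 1), m.choose i * a.choose i
      = ∑ i ∈ range (a + b + 1), m.choose i * a.choose i := by
    refine Finset.sum_subset (Finset.range_subset_range.mpr (by omega)) ?_
    intro i hi hi'
    rw [mem_range] at hi hi'
    rw [Nat.choose_eq_zero_of_lt (by omega : a < i), Nat.mul_zero]
  have h2 : ∑ i ∈ range (b + 1), m.choose i * a.choose i
      = ∑ i ∈ range (a + b + 1), m.choose i * a.choose i := by
    refine Finset.sum_subset (Finset.range_subset_range.mpr (by omega)) ?_
    intro i hi hi'
    rw [mem_range] at hi hi'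
    rw [Nat.choose_eq_zero_of_lt (by omega : m < i), Nat.zero_mul]
  rw [h1, h2]

lemma S1 (m a n : ℕ) (h : m ≤ n) :
    (m + a).choose m = ∑ j ∈ range (n + 1), m.choose j * a.choose j := by
  rw [Nat.choose_symm_add, vand m a a, ← S0 m a n h]
  refine Finset.sum_congr rfl fun i hi => ?_
  rw [mem_range] at hi
  rw [Nat.choose_symm (by omega : i ≤ a)]

lemma idB (n x : ℕ) :
    ∑ k ∈ range (n + 1), n.choose k * (x.choose k * (n + x + k).choose k)
      = (n + x).choose n ^ 2 := by
  rw [← Finset.sum_range_reflect]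
  simp only [Nat.add_sub_cancel]
  have B : ∀ k ∈ range (n + 1),
      n.choose (n - k) * (x.choose (n - k) * (n + x + (n - k)).choose (n - k))
        = ∑ j ∈ range (n + 1),
            n.choose (n - k) * (x.choose (n - k) * ((n - k).choose j * (n + x).choose j)) := by
    intro k hk
    rw [mem_range] at hk
    rw [Nat.add_comm (n + x) (n - k), S1 (n - k) (n + x) n (by omega),
      Finset.mul_sum, Finset.mul_sum]
  rw [Finset.sum_congr rfl B, Finset.sum_comm]
  have inner : ∀ j ∈ range (n + 1),
      (∑ k ∈ range (n + 1),
        n.choose (n - k) * (x.choose (n - k) * ((n - k).choose j * (n + x).choose j)))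
        = n.choose j * ((n + j).choose j * (n + x).choose (n + j)) := by
    intro j hj
    rw [mem_range] at hj
    have hterm : ∀ k ∈ range (n + 1),
        n.choose (n - k) * (x.choose (n - k) * ((n - k).choose j * (n + x).choose j))
          = (n + x).choose j * (n.choose j * ((n - j).choose k * x.choose (n - k))) := by
      intro k hk
      rw [mem_range] at hk
      rw [Nat.choose_symm (by omega : k ≤ n)]
      calc n.choose k * (x.choose (n - k) * ((n - k).choose j * (n + x).choose j))
          = (n.choose k * (n - k).choose j) * (x.choose (n - k) * (n + x).choose j) := by ring
        _ = (n.choose j * (n - j).choose k) * (x.choose (n - k) * (n + x).choose j) := by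
            rw [T3]
        _ = (n + x).choose j * (n.choose j * ((n - j).choose k * x.choose (n - k))) := by ring
    rw [Finset.sum_congr rfl hterm, ← Finset.mul_sum, ← Finset.mul_sum, ← vand (n - j) x n]
    have e1 : n - j + x = (n + x) - j := by omega
    rw [e1]
    calc (n + x).choose j * (n.choose j * ((n + x) - j).choose n)
        = n.choose j * ((n + x).choose j * ((n + x) - j).choose n) := by ring
      _ = n.choose j * ((n + x).choose (j + n) * (j + n).choose j) := by rw [T2 (n + x) j n]
      _ = n.choose j * ((n + j).choose j * (n + x).choose (n + j)) := by
          rw [Nat.add_comm j n]; ring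
  rw [Finset.sum_congr rfl inner, idP n (n + x)]


lemma harmonicQ_succ (m : ℕ) : harmonicQ (m + 1) = harmonicQ m + 1 / (m + 1) := by
  unfold harmonicQ; rw [Finset.sum_range_succ]

lemma prod_cast_desc (N m : ℕ) :
    ∏ j ∈ range m, ((N : ℚ) - j) = (N.descFactorial m : ℚ) := by
  induction m with
  | zero => simp
  | succ m ih =>
    rw [Finset.prod_range_succ, ih, Nat.descFactorial_succ]
    by_cases h : m ≤ N
    · push_cast [h]; ring
    · rw [Nat.descFactorial_eq_zero_iff_lt.mpr (by omega), Nat.sub_eq_zero_of_le (by omega)]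
      push_cast; ring

lemma sum_inv_desc (N m : ℕ) (h : m ≤ N) :
    ∑ j ∈ range m, ((N : ℚ) - j)⁻¹ = harmonicQ N - harmonicQ (N - m) := by
  induction m with
  | zero => simp
  | succ m ih =>
    rw [Finset.sum_range_succ, ih (by omega)]
    have h1 : N - m = (N - (m + 1)) + 1 := by omega
    rw [h1, harmonicQ_succ]
    have h2 : ((N - (m + 1) : ℕ) : ℚ) + 1 = (N : ℚ) - m := by
      have : ((N - (m + 1) : ℕ) : ℚ) = (N : ℚ) - (m + 1) := by
        push_cast [Nat.cast_sub (by omega : m + 1 ≤ N)]; ring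
      rw [this]; ring
    rw [h2]
    have h3 : (N : ℚ) - m ≠ 0 := by
      have : ((m : ℚ)) < (N : ℚ) := by exact_mod_cast (by omega : m < N)
      intro hc; rw [sub_eq_zero] at hc; exact absurd hc.symm (ne_of_lt this)
    field_simp
    ring

noncomputable def Qp (m a : ℕ) : Polynomial ℚ :=
  ∏ j ∈ range m, (X + Polynomial.C ((a : ℚ) - j))

lemma eval_Qp (m a x : ℕ) :
    eval (x : ℚ) (Qp m a) = ((x + a).descFactorial m : ℚ) := by
  unfold Qp
  rw [eval_prod, ← prod_cast_desc (x + a) m]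
  refine Finset.prod_congr rfl fun j _ => ?_
  simp only [eval_add, eval_X, eval_C]
  push_cast
  ring

-- the dual-number normal form
noncomputable def dn (u v : ℚ) : ℚ[ε] := inl u + inl v * ε

lemma dn_fst (u v : ℚ) : fst (dn u v) = u := by
  simp [dn, fst_mul]

lemma dn_snd (u v : ℚ) : snd (dn u v) = v := by
  simp [dn, DualNumber.snd_mul]

lemma dn_mul (u v u' v' : ℚ) : dn u v * dn u' v' = dn (u * u') (u * v' + v * u') := by
  refine TrivSqZeroExt.ext ?_ ?_
  · simp [dn, fst_mul, DualNumber.snd_mul]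
  · simp [dn, fst_mul, DualNumber.snd_mul]
    try ring

lemma dn_add (u v u' v' : ℚ) : dn u v + dn u' v' = dn (u + u') (v + v') := by
  refine TrivSqZeroExt.ext ?_ ?_ <;> simp [dn_fst, dn_snd, fst_add, snd_add, dn, DualNumber.snd_mul]

lemma dn_sum {s : Finset ℕ} (u v : ℕ → ℚ) :
    ∑ k ∈ s, dn (u k) (v k) = dn (∑ k ∈ s, u k) (∑ k ∈ s, v k) := by
  refine TrivSqZeroExt.ext ?_ ?_ <;>
    simp [fst_sum, snd_sum, dn_fst, dn_snd]

lemma dn_inl (u : ℚ) : (inl u : ℚ[ε]) = dn u 0 := by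
  refine TrivSqZeroExt.ext ?_ ?_ <;> simp [dn_fst, dn_snd]

lemma dn_eps : (ε : ℚ[ε]) = dn 0 1 := by
  refine TrivSqZeroExt.ext ?_ ?_ <;> simp [dn_fst, dn_snd]

lemma dn_inj {u v u' v' : ℚ} (h : dn u v = dn u' v') : u = u' ∧ v = v' := by
  constructor
  · have := congrArg fst h; rwa [dn_fst, dn_fst] at this
  · have := congrArg snd h; rwa [dn_snd, dn_snd] at this

lemma dual_prod (m : ℕ) (f : ℕ → ℚ) (hf : ∀ j, j < m → f j ≠ 0) :
    ∏ j ∈ range m, dn (f j) 1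
      = dn (∏ j ∈ range m, f j) ((∏ j ∈ range m, f j) * ∑ j ∈ range m, (f j)⁻¹) := by
  induction m with
  | zero => simp only [Finset.prod_range_zero, Finset.sum_range_zero, mul_zero, ← dn_inl, inl_one]
  | succ m ih =>
    rw [Finset.prod_range_succ, ih (fun j hj => hf j (by omega)), dn_mul,
      Finset.prod_range_succ, Finset.sum_range_succ]
    congr 1
    have hm : f m ≠ 0 := hf m (by omega)
    field_simp
    ring

lemma eq_poly_of_nat_eval (p q : Polynomial ℚ)
    (h : ∀ x : ℕ, eval (x : ℚ) p = eval (x : ℚ) q) : p = q := by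
  refine Polynomial.eq_of_infinite_eval_eq p q ?_
  refine Set.Infinite.mono ?_ (Set.infinite_range_of_injective
    (Nat.cast_injective : Function.Injective (Nat.cast : ℕ → ℚ)))
  rintro y ⟨x, rfl⟩
  exact h x

lemma polyB (n : ℕ) :
    ∑ k ∈ range (n + 1),
        Polynomial.C ((n.choose k : ℚ) / (k.factorial : ℚ) ^ 2) * (Qp k 0 * Qp k (n + k))
      = Polynomial.C ((1 : ℚ) / (n.factorial : ℚ) ^ 2) * (Qp n n) ^ 2 := by
  apply eq_poly_of_nat_eval
  intro x
  rw [eval_finset_sum]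
  simp only [eval_mul, eval_C, eval_pow, eval_Qp]
  have hterm : ∀ k ∈ range (n + 1),
      (n.choose k : ℚ) / (k.factorial : ℚ) ^ 2
          * (((x + 0).descFactorial k : ℚ) * ((x + (n + k)).descFactorial k : ℚ))
        = (n.choose k : ℚ) * ((x.choose k : ℚ) * ((n + x + k).choose k : ℚ)) := by
    intro k _
    rw [Nat.add_zero, Nat.descFactorial_eq_factorial_mul_choose,
      Nat.descFactorial_eq_factorial_mul_choose,
      show x + (n + k) = n + x + k from by omega]
    have hk : (k.factorial : ℚ) ≠ 0 := by exact_mod_cast k.factorial_ne_zero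
    push_cast
    field_simp
  rw [Finset.sum_congr rfl hterm]
  rw [Nat.descFactorial_eq_factorial_mul_choose]
  have hn : (n.factorial : ℚ) ≠ 0 := by exact_mod_cast n.factorial_ne_zero
  have := idB n x
  have hcast : (∑ k ∈ range (n + 1), (n.choose k : ℚ) * ((x.choose k : ℚ) * ((n + x + k).choose k : ℚ)))
      = ((n + x).choose n : ℚ) ^ 2 := by exact_mod_cast congrArg (Nat.cast : ℕ → ℚ) this
  rw [hcast, show x + n = n + x from by omega]
  push_cast
  field_simp

lemma polyA (n : ℕ) :
    ∑ k ∈ range (n + 1),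
        Polynomial.C ((n.choose k : ℚ) ^ 2 / ((2 * n).factorial : ℚ)) * Qp (2 * n) k
      = Polynomial.C ((1 : ℚ) / (n.factorial : ℚ) ^ 2) * (Qp n 0) ^ 2 := by
  apply eq_poly_of_nat_eval
  intro x
  rw [eval_finset_sum]
  simp only [eval_mul, eval_C, eval_pow, eval_Qp]
  have hterm : ∀ k ∈ range (n + 1),
      (n.choose k : ℚ) ^ 2 / ((2 * n).factorial : ℚ) * ((x + k).descFactorial (2 * n) : ℚ)
        = (n.choose k : ℚ) ^ 2 * ((x + k).choose (2 * n) : ℚ) := by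
    intro k _
    rw [Nat.descFactorial_eq_factorial_mul_choose]
    have h2n : ((2 * n).factorial : ℚ) ≠ 0 := by exact_mod_cast (2 * n).factorial_ne_zero
    push_cast
    field_simp
  rw [Finset.sum_congr rfl hterm]
  rw [Nat.add_zero, Nat.descFactorial_eq_factorial_mul_choose]
  have hn : (n.factorial : ℚ) ≠ 0 := by exact_mod_cast n.factorial_ne_zero
  have hcast : (∑ k ∈ range (n + 1), (n.choose k : ℚ) ^ 2 * ((x + k).choose (2 * n) : ℚ))
      = (x.choose n : ℚ) ^ 2 := by exact_mod_cast congrArg (Nat.cast : ℕ → ℚ) (idA n x)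
  rw [hcast]
  push_cast
  field_simp
  ring

lemma aeval_C' (r : ℚ) (z : ℚ[ε]) : aeval z (Polynomial.C r) = dn r 0 := by
  rw [aeval_C, ← dn_inl]
  exact congrFun (TrivSqZeroExt.algebraMap_eq_inl (R' := ℚ) (M := ℚ)) r

lemma aeval_Qp (c m a : ℕ) (h : m ≤ c + a) :
    aeval (dn (c : ℚ) 1) (Qp m a)
      = dn ((c + a).descFactorial m : ℚ)
          (((c + a).descFactorial m : ℚ) * (harmonicQ (c + a) - harmonicQ (c + a - m))) := by
  unfold Qp
  rw [map_prod]
  have hfac : ∀ j ∈ range m,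
      aeval (dn (c : ℚ) 1) (X + Polynomial.C ((a : ℚ) - j))
        = dn (((c + a : ℕ) : ℚ) - j) 1 := by
    intro j _
    rw [map_add, aeval_X, aeval_C']
    rw [dn_add]
    congr 1
    · push_cast; ring
    · ring
  rw [Finset.prod_congr rfl hfac, dual_prod m _ ?_, prod_cast_desc, sum_inv_desc _ _ h]
  intro j hj
  have : (j : ℚ) < ((c + a : ℕ) : ℚ) := by exact_mod_cast (by omega : j < c + a)
  intro hc; rw [sub_eq_zero] at hc; exact absurd hc.symm (ne_of_lt this)

lemma dn_sq (u v : ℚ) : dn u v ^ 2 = dn (u * u) (u * v + v * u) := by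
  rw [pow_two, dn_mul]

lemma keyB (n : ℕ) :
    (∑ k ∈ range (n + 1), (n.choose k : ℚ) ^ 2 * ((2 * n + k).choose k : ℚ)
        = ((2 * n).choose n : ℚ) ^ 2) ∧
    (∑ k ∈ range (n + 1), (n.choose k : ℚ) ^ 2 * ((2 * n + k).choose k : ℚ)
          * ((harmonicQ n - harmonicQ (n - k)) + (harmonicQ (2 * n + k) - harmonicQ (2 * n)))
        = ((2 * n).choose n : ℚ) ^ 2 * (2 * (harmonicQ (2 * n) - harmonicQ n))) := by
  have key := congrArg (aeval (dn (n : ℚ) 1)) (polyB n)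
  rw [map_sum, map_mul, aeval_C', map_pow, aeval_Qp n n n (by omega), dn_sq, dn_mul] at key
  have hterm : ∀ k ∈ range (n + 1),
      aeval (dn (n : ℚ) 1)
          (Polynomial.C ((n.choose k : ℚ) / (k.factorial : ℚ) ^ 2) * (Qp k 0 * Qp k (n + k)))
        = dn ((n.choose k : ℚ) ^ 2 * ((2 * n + k).choose k : ℚ))
            ((n.choose k : ℚ) ^ 2 * ((2 * n + k).choose k : ℚ)
              * ((harmonicQ n - harmonicQ (n - k)) + (harmonicQ (2 * n + k) - harmonicQ (2 * n)))) := by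
    intro k hk
    rw [mem_range] at hk
    rw [map_mul, map_mul, aeval_C', aeval_Qp n k 0 (by omega), aeval_Qp n k (n + k) (by omega),
      dn_mul, dn_mul]
    have e1 : (n.descFactorial k : ℚ) = (k.factorial : ℚ) * (n.choose k : ℚ) := by
      rw [Nat.descFactorial_eq_factorial_mul_choose]; push_cast; ring
    have e2 : (((2 * n + k)).descFactorial k : ℚ)
        = (k.factorial : ℚ) * ((2 * n + k).choose k : ℚ) := by
      rw [Nat.descFactorial_eq_factorial_mul_choose]; push_cast; ring
    have hkf : (k.factorial : ℚ) ≠ 0 := by exact_mod_cast k.factorial_ne_zero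
    rw [show n + (n + k) - k = 2 * n from by omega, show n + 0 - k = n - k from by omega,
      show n + (n + k) = 2 * n + k from by omega, show n + 0 = n from rfl, e1, e2]
    congr 1
    · field_simp
    · field_simp; ring
  rw [Finset.sum_congr rfl hterm, dn_sum] at key
  have e3 : ((2 * n).descFactorial n : ℚ) = (n.factorial : ℚ) * ((2 * n).choose n : ℚ) := by
    rw [Nat.descFactorial_eq_factorial_mul_choose]
    push_cast; ring
  rw [show n + n - n = n from by omega, show n + n = 2 * n from by omega, e3] at key
  have hnf : (n.factorial : ℚ) ≠ 0 := by exact_mod_cast n.factorial_ne_zero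
  obtain ⟨h1, h2⟩ := dn_inj key
  constructor
  · rw [h1]; field_simp
  · rw [h2]; field_simp; ring

lemma keyA (n : ℕ) :
    ∑ k ∈ range (n + 1), (n.choose k : ℚ) ^ 2 * ((2 * n + k).choose k : ℚ)
          * (harmonicQ (2 * n + k) - harmonicQ k)
        = ((2 * n).choose n : ℚ) ^ 2 * (2 * (harmonicQ (2 * n) - harmonicQ n)) := by
  have key := congrArg (aeval (dn ((2 * n : ℕ) : ℚ) 1)) (polyA n)
  rw [map_sum, map_mul, aeval_C', map_pow, aeval_Qp (2 * n) n 0 (by omega), dn_sq,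
    dn_mul] at key
  have hterm : ∀ k ∈ range (n + 1),
      aeval (dn ((2 * n : ℕ) : ℚ) 1)
          (Polynomial.C ((n.choose k : ℚ) ^ 2 / ((2 * n).factorial : ℚ)) * Qp (2 * n) k)
        = dn ((n.choose k : ℚ) ^ 2 * ((2 * n + k).choose k : ℚ))
            ((n.choose k : ℚ) ^ 2 * ((2 * n + k).choose k : ℚ)
              * (harmonicQ (2 * n + k) - harmonicQ k)) := by
    intro k hk
    rw [mem_range] at hk
    rw [map_mul, aeval_C', aeval_Qp (2 * n) (2 * n) k (by omega), dn_mul]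
    have e2 : ((2 * n + k).descFactorial (2 * n) : ℚ)
        = ((2 * n).factorial : ℚ) * ((2 * n + k).choose k : ℚ) := by
      rw [Nat.descFactorial_eq_factorial_mul_choose, Nat.choose_symm_add]; push_cast; ring
    have hkf : ((2 * n).factorial : ℚ) ≠ 0 := by exact_mod_cast (2 * n).factorial_ne_zero
    rw [show 2 * n + k - 2 * n = k from by omega, e2]
    congr 1
    · field_simp
    · field_simp; ring
  rw [Finset.sum_congr rfl hterm, dn_sum] at key
  have e3 : ((2 * n).descFactorial n : ℚ) = (n.factorial : ℚ) * ((2 * n).choose n : ℚ) := by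
    rw [Nat.descFactorial_eq_factorial_mul_choose]; push_cast; ring
  rw [show 2 * n + 0 - n = n from by omega, show 2 * n + 0 = 2 * n from by omega, e3] at key
  have hnf : (n.factorial : ℚ) ≠ 0 := by exact_mod_cast n.factorial_ne_zero
  obtain ⟨h1, h2⟩ := dn_inj key
  rw [h2]; field_simp; ring

theorem stmt6 (n : ℕ) :
    ∑ k ∈ range (n + 1), (n.choose k : ℚ) ^ 2 * ((2 * n + k).choose k : ℚ) * (harmonicQ k - harmonicQ (n - k))
      = ((2 * n).choose n : ℚ) ^ 2 * (harmonicQ (2 * n) - harmonicQ n) := by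
  obtain ⟨hBf, hBs⟩ := keyB n
  have hAs := keyA n
  have split : ∀ k, (n.choose k : ℚ) ^ 2 * ((2 * n + k).choose k : ℚ) * (harmonicQ k - harmonicQ (n - k))
      = (n.choose k : ℚ) ^ 2 * ((2 * n + k).choose k : ℚ)
          * ((harmonicQ n - harmonicQ (n - k)) + (harmonicQ (2 * n + k) - harmonicQ (2 * n)))
        - (n.choose k : ℚ) ^ 2 * ((2 * n + k).choose k : ℚ) * (harmonicQ (2 * n + k) - harmonicQ k)
        + (n.choose k : ℚ) ^ 2 * ((2 * n + k).choose k : ℚ) * (harmonicQ (2 * n) - harmonicQ n) := by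
    intro k; ring
  rw [Finset.sum_congr rfl (fun k _ => split k)]
  rw [Finset.sum_add_distrib, Finset.sum_sub_distrib, hBs, hAs, ← Finset.sum_mul, hBf]
  ring
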